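/- (Exponential convergence of the error variance.) For every node k ∈ {1,…,n} and every t ≥ 0, the error variance g_k(t) = Σ_{p=2}^n ((1 − e^{−2λ_p t})/(2λ_p))·(u_k⁽ᵖ⁾)² satisfies |g_k(t) − 1/μ_k| ≤ e^{−2λ₂ t}/μ_k, where λ₂ is the smallest positive eigenvalue of L; in particular g_k(t) converges exponentially to 1/μ_k as t → ∞. -/

import Mathlib

open Finset Matrix

/-- **Exponential convergence of the error variance.**
For every node `k` and `t ≥ 0`, the error variance
`g_k(t) = Σ_{p≠1} ((1 − e^{−2λ_p t})/(2λ_p))·(u_k⁽ᵖ⁾)²` satisfies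
`|g_k(t) − 1/μ_k| ≤ e^{−2λ₂ t}/μ_k`, where `λ₂` is the smallest positive eigenvalue of `L`
and `1/μ_k = Σ_{p≠1} (u_k⁽ᵖ⁾)²/(2λ_p)`. -/
theorem coupledDDM_error_variance_exponential_convergence
    (n : ℕ) [NeZero n] (hn : 2 ≤ n)
    (L : Matrix (Fin n) (Fin n) ℝ)
    (hsymm : L.IsSymm) (hpsd : L.PosSemidef)
    (hL1 : L *ᵥ (fun _ => (1 : ℝ)) = 0)
    (hker : ∀ v : Fin n → ℝ, L *ᵥ v = 0 → ∃ c : ℝ, v = fun _ => c)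
    (lam : Fin n → ℝ) (u : Fin n → Fin n → ℝ)
    (hlam0 : lam 0 = 0)
    (hlampos : ∀ p : Fin n, p ≠ 0 → 0 < lam p)
    (hmono : Monotone lam)
    (heig : ∀ p : Fin n, L *ᵥ u p = lam p • u p)
    (horth : ∀ p q : Fin n, ∑ k, u p k * u q k = if p = q then (1 : ℝ) else 0)
    (hu0 : u 0 = fun _ => 1 / Real.sqrt n)
    (k : Fin n) (μ : ℝ) (hμpos : 0 < μ)
    (hμ : 1 / μ = ∑ p ∈ Finset.univ.erase (0 : Fin n), (u p k) ^ 2 / (2 * lam p))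
    (t : ℝ) (ht : 0 ≤ t) :
    |(∑ p ∈ Finset.univ.erase (0 : Fin n),
        (1 - Real.exp (-2 * lam p * t)) / (2 * lam p) * (u p k) ^ 2) - 1 / μ|
      ≤ Real.exp (-2 * lam (⟨1, by omega⟩ : Fin n) * t) / μ := by
  set lam2 := lam (⟨1, by omega⟩ : Fin n) with hlam2
  have hdiff : (∑ p ∈ Finset.univ.erase (0 : Fin n),
      (1 - Real.exp (-2 * lam p * t)) / (2 * lam p) * (u p k) ^ 2) - 1 / μ
      = -∑ p ∈ Finset.univ.erase (0 : Fin n),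
          Real.exp (-2 * lam p * t) / (2 * lam p) * (u p k) ^ 2 := by
    rw [hμ, ← Finset.sum_sub_distrib, ← Finset.sum_neg_distrib]
    refine Finset.sum_congr rfl fun p hp => ?_
    have hl : lam p ≠ 0 := ne_of_gt (hlampos p (Finset.ne_of_mem_erase hp))
    field_simp
    ring
  rw [hdiff, abs_neg]
  have hterm_nonneg : ∀ p ∈ Finset.univ.erase (0 : Fin n),
      0 ≤ Real.exp (-2 * lam p * t) / (2 * lam p) * (u p k) ^ 2 := by
    intro p hp
    have hl : 0 < lam p := hlampos p (Finset.ne_of_mem_erase hp)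
    positivity
  rw [abs_of_nonneg (Finset.sum_nonneg hterm_nonneg)]
  have hRHS : Real.exp (-2 * lam2 * t) / μ
      = ∑ p ∈ Finset.univ.erase (0 : Fin n),
          Real.exp (-2 * lam2 * t) * ((u p k) ^ 2 / (2 * lam p)) := by
    rw [← Finset.mul_sum, ← hμ]
    ring
  rw [hRHS]
  refine Finset.sum_le_sum fun p hp => ?_
  have hl : 0 < lam p := hlampos p (Finset.ne_of_mem_erase hp)
  have hle : lam2 ≤ lam p := by
    apply hmono
    have : p ≠ 0 := Finset.ne_of_mem_erase hp
    have hp1 : 1 ≤ (p : ℕ) := Nat.one_le_iff_ne_zero.mpr (by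
      exact Fin.val_ne_zero_iff.mpr this)
    exact hp1
  have hexp : Real.exp (-2 * lam p * t) ≤ Real.exp (-2 * lam2 * t) := by
    apply Real.exp_le_exp.mpr
    nlinarith
  calc Real.exp (-2 * lam p * t) / (2 * lam p) * (u p k) ^ 2
      = Real.exp (-2 * lam p * t) * ((u p k) ^ 2 / (2 * lam p)) := by ring
    _ ≤ Real.exp (-2 * lam2 * t) * ((u p k) ^ 2 / (2 * lam p)) := by
        apply mul_le_mul_of_nonneg_right hexp
        positivity
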